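/- Suppose for each i there exist a_ij ∈ ℝ with a_ij ≥ 0 for j ≠ i, ∑_{j} a_ij < 0, and ∑_j a_ij γ_j ≤ 0 where all γ_j > 0. Then the matrix A = [a_ij] (with a_ij = 0 for non-neighbors) is Hurwitz and the box {v ∈ ℝ^m : 0 ≤ v_i ≤ γ_i} is invariant for v' = A v restricted to nonnegative solutions. -/
import Mathlib


/-- The decentralized constraints `a_ij ≥ 0 (j ≠ i)`, `∑_j a_ij < 0`,
`∑_j a_ij γ_j ≤ 0` with `γ > 0` imply that `A` is Hurwitz and that the box
`{v : 0 ≤ v_i ≤ γ_i}` is invariant for nonnegative solutions of `v' = A v`. -/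
theorem stmt_17 {m : ℕ} (A : Matrix (Fin m) (Fin m) ℝ)
    (γ : Fin m → ℝ) (hγ : ∀ i, 0 < γ i)
    (hMetzler : ∀ i j, i ≠ j → 0 ≤ A i j)
    (hrowneg : ∀ i, ∑ j, A i j < 0)
    (hrowγ : ∀ i, ∑ j, A i j * γ j ≤ 0) :
    (∀ lam : ℂ, lam ∈ spectrum ℂ (A.map (Complex.ofReal ·)) → lam.re < 0) ∧
    (∀ v : ℝ → Fin m → ℝ,
      (∀ t, ∀ i, HasDerivAt (fun s => v s i) (A.mulVec (v t) i) t) →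
      (∀ t, 0 ≤ t → ∀ i, 0 ≤ v t i) →
      (∀ i, v 0 i ≤ γ i) →
      ∀ t, 0 ≤ t → ∀ i, v t i ≤ γ i) := by
  constructor
  · -- Hurwitz via Gershgorin
    intro lam h
    rw [← AlgEquiv.spectrum_eq (Matrix.toLinAlgEquiv' : Matrix (Fin m) (Fin m) ℂ ≃ₐ[ℂ] _),
      ← Module.End.hasEigenvalue_iff_mem_spectrum] at h
    obtain ⟨k, hk⟩ := eigenvalue_mem_ball (A := A.map (Complex.ofReal ·)) h
    rw [Metric.mem_closedBall] at hk
    have hre : lam.re - A k k ≤ dist lam ((A.map (Complex.ofReal ·)) k k) := by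
      have : lam.re - A k k = (lam - ((A k k : ℝ) : ℂ)).re := by simp
      calc lam.re - A k k = (lam - ((A k k : ℝ) : ℂ)).re := this
        _ ≤ ‖lam - ((A k k : ℝ) : ℂ)‖ := Complex.re_le_norm _
        _ = dist lam ((A.map (Complex.ofReal ·)) k k) := by
            rw [Matrix.map_apply, dist_eq_norm]
    have hnorms : ∑ j ∈ Finset.univ.erase k, ‖(A.map (Complex.ofReal ·)) k j‖
        = ∑ j ∈ Finset.univ.erase k, A k j := by
      refine Finset.sum_congr rfl fun j hj => ?_
      rw [Matrix.map_apply, Complex.norm_real,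
        Real.norm_of_nonneg (hMetzler k j (Finset.ne_of_mem_erase hj).symm)]
    have hsum : A k k + ∑ j ∈ Finset.univ.erase k, A k j = ∑ j, A k j := by
      rw [Finset.add_sum_erase _ _ (Finset.mem_univ k)]
    have := hrowneg k
    have : lam.re ≤ ∑ j, A k j := by
      have h1 := hre.trans hk
      rw [hnorms] at h1
      linarith [h1, hsum.symm ▸ le_refl (∑ j, A k j)]
    linarith [hrowneg k]
  · -- Invariance
    intro v hderiv _hnn h0 t ht i
    -- continuity of each component
    have hcont : ∀ i, Continuous fun s => v s i := fun i =>
      continuous_iff_continuousAt.mpr fun s => (hderiv s i).continuousAt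
    -- it suffices to show `v t i ≤ γ i + ε` for all `ε > 0`
    refine le_of_forall_pos_le_add (fun ε hε => ?_)
    by_contra hcon
    push_neg at hcon
    -- the set of times in [0, t] where some component reaches γ + ε
    set S : Set ℝ := {s | s ∈ Set.Icc 0 t ∧ ∃ j, γ j + ε ≤ v s j} with hS
    have hSclosed : IsClosed S := by
      have : S = Set.Icc 0 t ∩ ⋃ j, {s | γ j + ε ≤ v s j} := by
        ext s; simp [hS, Set.mem_iUnion, and_comm]
      rw [this]
      exact isClosed_Icc.inter (isClosed_iUnion_of_finite fun j =>
        isClosed_le continuous_const (hcont j))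
    have hSne : S.Nonempty := ⟨t, ⟨ht, le_rfl⟩, i, hcon.le⟩
    have hSbdd : BddBelow S := ⟨0, fun s hs => hs.1.1⟩
    set τ := sInf S with hτ
    have hτS : τ ∈ S := hSclosed.csInf_mem hSne hSbdd
    obtain ⟨⟨hτ0, hτt⟩, k, hk⟩ := hτS
    -- before τ, all components are below γ + ε
    have hbefore : ∀ s, 0 ≤ s → s < τ → ∀ j, v s j < γ j + ε := by
      intro s hs0 hsτ j
      by_contra hge
      push_neg at hge
      have : s ∈ S := ⟨⟨hs0, hsτ.le.trans hτt⟩, j, hge⟩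
      exact absurd (csInf_le hSbdd this) (not_le.mpr hsτ)
    -- τ > 0
    have hτpos : 0 < τ := by
      rcases lt_or_eq_of_le hτ0 with h | h
      · exact h
      · exfalso
        have := h0 k
        have := hγ k
        rw [← h] at hk
        linarith [h0 k]
    -- at τ, all components are ≤ γ + ε
    have hatτ : ∀ j, v τ j ≤ γ j + ε := by
      intro j
      have hne : (nhdsWithin τ (Set.Iio τ)).NeBot := nhdsLT_neBot τ
      refine le_of_tendsto (((hcont j).tendsto τ).mono_left
        (nhdsWithin_le_nhds : nhdsWithin τ (Set.Iio τ) ≤ _)) ?_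
      filter_upwards [Ioo_mem_nhdsLT_of_mem (Set.mem_Ioc.mpr ⟨hτpos, le_rfl⟩)] with s hs
      exact (hbefore s hs.1.le hs.2 j).le
    have hkeq : v τ k = γ k + ε := le_antisymm (hatτ k) hk
    -- the derivative at τ is strictly negative
    have hDneg : A.mulVec (v τ) k < 0 := by
      have hle : A.mulVec (v τ) k ≤ ∑ j, A k j * (γ j + ε) := by
        rw [Matrix.mulVec, dotProduct]
        refine Finset.sum_le_sum fun j _ => ?_
        rcases eq_or_ne j k with rfl | hjk
        · rw [hkeq]
        · exact mul_le_mul_of_nonneg_left (hatτ j) (hMetzler k j hjk.symm)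
      have : ∑ j, A k j * (γ j + ε) = (∑ j, A k j * γ j) + ε * ∑ j, A k j := by
        rw [Finset.mul_sum, ← Finset.sum_add_distrib]
        exact Finset.sum_congr rfl fun j _ => by ring
      have hlt : ∑ j, A k j * (γ j + ε) < 0 := by
        rw [this]
        have := hrowγ k
        have := hrowneg k
        nlinarith
      linarith
    -- but the slope from the left is nonnegative, contradiction
    have hslope : Filter.Tendsto (slope (fun s => v s k) τ) (nhdsWithin τ (Set.Iio τ))
        (nhds (A.mulVec (v τ) k)) :=
      ((hasDerivAt_iff_tendsto_slope.mp (hderiv τ k)).mono_left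
        (nhdsWithin_mono τ fun s hs => ne_of_lt hs))
    have hne : (nhdsWithin τ (Set.Iio τ)).NeBot := nhdsLT_neBot τ
    have h0le : 0 ≤ A.mulVec (v τ) k := by
      refine ge_of_tendsto hslope ?_
      filter_upwards [Ioo_mem_nhdsLT_of_mem (Set.mem_Ioc.mpr ⟨hτpos, le_rfl⟩)] with s hs
      have hvs : v s k < v τ k := by
        rw [hkeq]; exact hbefore s hs.1.le hs.2 k
      have : slope (fun s => v s k) τ s = (v s k - v τ k) / (s - τ) := by
        simp [slope, div_eq_inv_mul]
      rw [this]
      exact le_of_lt (div_pos_of_neg_of_neg (by linarith) (by linarith [hs.2]))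
    linarith
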